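/- arXiv:1710.07420 — 3 statements merged into one kernel-verified Lean document; each statement's English description precedes it below -/
import Mathlib

section
/- Let Δ_1, Δ_2 ∈ ℝ satisfy 0 < |Δ_1| < |Δ_2|. Then for every positive integer k, P[|L_{Δ_1}| ≤ k] ≤ P[|L_{Δ_2}| ≤ k]. -/
open MeasureTheory ProbabilityTheory Filter

/-- Two-sided Gaussian random walk:
`X_Δ(i) = sgn(Δ)(ε₁+⋯+ε_i) + i|Δ|/2` for `i > 0`, `X_Δ(0) = 0`, and
`X_Δ(i) = −sgn(Δ)(ε_{i+1}+⋯+ε_0) + |i|·|Δ|/2` for `i < 0`. -/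
noncomputable def walkX {Ω : Type*} (ε : ℤ → Ω → ℝ) (Δ : ℝ) (i : ℤ) (ω : Ω) : ℝ :=
  if 0 < i then Real.sign Δ * (∑ j ∈ Finset.Icc (1 : ℤ) i, ε j ω) + (i : ℝ) * |Δ| / 2
  else if i < 0 then
    -(Real.sign Δ * (∑ j ∈ Finset.Icc (i + 1) (0 : ℤ), ε j ω)) + ((|i| : ℤ) : ℝ) * |Δ| / 2
  else 0

/-- `L` is almost surely the unique minimizer of the process `f` over `ℤ`. -/
def IsASUniqueArgmin {Ω : Type*} [MeasurableSpace Ω] (μ : Measure Ω)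
    (f : ℤ → Ω → ℝ) (L : Ω → ℤ) : Prop :=
  ∀ᵐ ω ∂μ, ∀ i : ℤ, i ≠ L ω → f (L ω) ω < f i ω

section Aux

/-- Negating the drift is the same as negating the noise. -/
lemma walkX_neg_delta {Ω : Type*} (ε : ℤ → Ω → ℝ) (Δ : ℝ) (i : ℤ) (ω : Ω) :
    walkX ε (-Δ) i ω = walkX (fun j ω => -ε j ω) Δ i ω := by
  unfold walkX
  rw [Real.sign_neg, abs_neg]
  split_ifs with h1 h2
  · simp only [Finset.sum_neg_distrib]; ring
  · simp only [Finset.sum_neg_distrib]; ring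
  · rfl

/-- If the signs agree, changing the drift shifts the walk by `|i| * (|Δ'| - |Δ|)/2`. -/
lemma walkX_shift {Ω : Type*} (ε : ℤ → Ω → ℝ) {Δ Δ' : ℝ} (h : Real.sign Δ = Real.sign Δ')
    (i : ℤ) (ω : Ω) :
    walkX ε Δ' i ω = walkX ε Δ i ω + ((|i| : ℤ) : ℝ) * ((|Δ'| - |Δ|) / 2) := by
  unfold walkX
  split_ifs with h1 h2
  · rw [← h, abs_of_pos h1]
    ring
  · rw [← h, abs_of_neg h2]
    push_cast
    ring
  · have hi : i = 0 := le_antisymm (not_lt.mp h1) (not_lt.mp h2)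
    subst hi
    simp

/-- The walk as a function of the coordinates of the path space `ℤ → ℝ`. -/
noncomputable def coordWalk (Δ : ℝ) (i : ℤ) : (ℤ → ℝ) → ℝ :=
  walkX (fun j x => x j) Δ i

lemma measurable_coordWalk (Δ : ℝ) (i : ℤ) : Measurable (coordWalk Δ i) := by
  unfold coordWalk walkX
  split_ifs with h1 h2
  · exact (measurable_const.mul
      (Finset.measurable_sum _ fun j _ => measurable_pi_apply j)).add measurable_const
  · exact ((measurable_const.mul
      (Finset.measurable_sum _ fun j _ => measurable_pi_apply j)).neg).add measurable_const
  · exact measurable_const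

/-- The event, in path space, that some site in `[-K, K]` strictly beats all sites outside. -/
def goodSet (Δ : ℝ) (K : ℤ) : Set (ℤ → ℝ) :=
  {x | ∃ j : ℤ, |j| ≤ K ∧ ∀ i : ℤ, K < |i| → coordWalk Δ j x < coordWalk Δ i x}

lemma measurableSet_goodSet (Δ : ℝ) (K : ℤ) : MeasurableSet (goodSet Δ K) := by
  have h : goodSet Δ K = ⋃ (j : ℤ) (_ : |j| ≤ K), ⋂ (i : ℤ) (_ : K < |i|),
      {x | coordWalk Δ j x < coordWalk Δ i x} := by
    ext x
    simp [goodSet]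
  rw [h]
  exact MeasurableSet.iUnion fun j => MeasurableSet.iUnion fun _ =>
    MeasurableSet.iInter fun i => MeasurableSet.iInter fun _ =>
      measurableSet_lt (measurable_coordWalk _ _) (measurable_coordWalk _ _)

/-- The corresponding event in `Ω`. -/
def eventB {Ω : Type*} (ε : ℤ → Ω → ℝ) (Δ : ℝ) (K : ℤ) : Set Ω :=
  {ω | ∃ j : ℤ, |j| ≤ K ∧ ∀ i : ℤ, K < |i| → walkX ε Δ j ω < walkX ε Δ i ω}

lemma eventB_eq_preimage {Ω : Type*} (ε : ℤ → Ω → ℝ) (Δ : ℝ) (K : ℤ) :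
    eventB ε Δ K = (fun ω (i : ℤ) => ε i ω) ⁻¹' goodSet Δ K := rfl

lemma eventB_neg {Ω : Type*} (ε : ℤ → Ω → ℝ) (Δ : ℝ) (K : ℤ) :
    eventB ε (-Δ) K = (fun ω (i : ℤ) => -ε i ω) ⁻¹' goodSet Δ K := by
  have h : eventB ε (-Δ) K = eventB (fun j ω => -ε j ω) Δ K := by
    unfold eventB
    simp only [walkX_neg_delta]
  rw [h]
  rfl

/-- The law of the i.i.d. standard Gaussian family is invariant under negation. -/
lemma map_neg_eq_map {Ω : Type*} [MeasurableSpace Ω] (μ : Measure Ω) [IsProbabilityMeasure μ]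
    (ε : ℤ → Ω → ℝ)
    (hmeas : ∀ i, Measurable (ε i))
    (hindep : iIndepFun ε μ)
    (hgauss : ∀ i, Measure.map (ε i) μ = gaussianReal 0 1) :
    Measure.map (fun ω (i : ℤ) => -ε i ω) μ = Measure.map (fun ω (i : ℤ) => ε i ω) μ := by
  have hξ : Measurable fun ω (i : ℤ) => ε i ω := measurable_pi_lambda _ hmeas
  have hξ' : Measurable fun ω (i : ℤ) => -ε i ω := measurable_pi_lambda _ fun i => (hmeas i).neg
  have hgauss' : ∀ i, Measure.map (fun ω => -ε i ω) μ = gaussianReal 0 1 := by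
    intro i
    have hcomp : (fun ω => -ε i ω) = (fun x : ℝ => -1 * x) ∘ ε i := by
      funext ω; simp
    have hv : (⟨(-1 : ℝ) ^ 2, sq_nonneg _⟩ : NNReal) = 1 := by
      ext; norm_num
    rw [hcomp, ← Measure.map_map (show Measurable fun x : ℝ => -1 * x by fun_prop) (hmeas i),
      hgauss i, gaussianReal_map_const_mul (-1)]
    rw [show (-1 : ℝ) * 0 = 0 by norm_num]
    congr 1
    ext
    simp
  have hindep' : iIndepFun (fun i ω => -ε i ω) μ := by
    have := hindep.comp (fun _ => fun x : ℝ => -x) (fun _ => measurable_neg)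
    exact this
  haveI : IsProbabilityMeasure (Measure.map (fun ω (i : ℤ) => -ε i ω) μ) :=
    Measure.isProbabilityMeasure_map hξ'.aemeasurable
  haveI : IsProbabilityMeasure (Measure.map (fun ω (i : ℤ) => ε i ω) μ) :=
    Measure.isProbabilityMeasure_map hξ.aemeasurable
  refine ext_of_generate_finite
    (squareCylinders fun _ : ℤ => {s : Set ℝ | MeasurableSet s})
    generateFrom_squareCylinders.symm
    (isPiSystem_squareCylinders
      (fun _ s (hs : MeasurableSet s) t (ht : MeasurableSet t) _ =>
        (hs.inter ht : MeasurableSet (s ∩ t)))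
      (fun _ => (by exact MeasurableSet.univ : MeasurableSet (Set.univ : Set ℝ)))) ?_ (by simp)
  rintro S ⟨s, t, ht, rfl⟩
  have htm : ∀ i, MeasurableSet (t i) := fun i => ht i (Set.mem_univ i)
  have hpi : MeasurableSet ((s : Set ℤ).pi t) :=
    MeasurableSet.pi s.countable_toSet (fun i _ => htm i)
  rw [Measure.map_apply hξ' hpi, Measure.map_apply hξ hpi]
  have h1 : (fun ω (i : ℤ) => ε i ω) ⁻¹' ((s : Set ℤ).pi t) = ⋂ i ∈ s, ε i ⁻¹' t i := by
    ext ω; simp [Set.mem_pi]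
  have h2 : (fun ω (i : ℤ) => -ε i ω) ⁻¹' ((s : Set ℤ).pi t)
      = ⋂ i ∈ s, (fun ω => -ε i ω) ⁻¹' t i := by
    ext ω; simp [Set.mem_pi]
  rw [h1, h2, hindep'.measure_inter_preimage_eq_mul s (fun i _ => htm i),
    hindep.measure_inter_preimage_eq_mul s (fun i _ => htm i)]
  refine Finset.prod_congr rfl fun i _ => ?_
  rw [← Measure.map_apply (f := fun ω => -ε i ω) ((hmeas i).neg) (htm i), ← Measure.map_apply (hmeas i) (htm i),
    hgauss i, hgauss' i]

end Aux

/-- If `0 < |Δ₁| < |Δ₂|`, then for every positive integer `k`,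
`P[|L_{Δ₁}| ≤ k] ≤ P[|L_{Δ₂}| ≤ k]`, where `L_Δ` is the a.s. unique minimizer of the
two-sided Gaussian random walk `X_Δ` driven by i.i.d. standard normal increments. -/
theorem argmin_stochastic_ordering
    {Ω : Type*} [MeasurableSpace Ω] (μ : Measure Ω) [IsProbabilityMeasure μ]
    (ε : ℤ → Ω → ℝ)
    (hmeas : ∀ i, Measurable (ε i))
    (hindep : iIndepFun ε μ)
    (hgauss : ∀ i, Measure.map (ε i) μ = gaussianReal 0 1)
    (Δ₁ Δ₂ : ℝ) (h₁ : 0 < |Δ₁|) (h₁₂ : |Δ₁| < |Δ₂|)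
    (L : ℝ → Ω → ℤ)
    (hL₁ : IsASUniqueArgmin μ (walkX ε Δ₁) (L Δ₁))
    (hL₂ : IsASUniqueArgmin μ (walkX ε Δ₂) (L Δ₂)) :
    ∀ k : ℕ, 0 < k →
      μ {ω | |L Δ₁ ω| ≤ (k : ℤ)} ≤ μ {ω | |L Δ₂ ω| ≤ (k : ℤ)} := by
  intro k _
  set K : ℤ := (k : ℤ) with hK
  -- Step A: the event `{|L Δ| ≤ K}` agrees a.e. with the explicit event `eventB ε Δ K`.
  have stepA : ∀ Δ : ℝ, IsASUniqueArgmin μ (walkX ε Δ) (L Δ) →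
      μ {ω | |L Δ ω| ≤ K} = μ (eventB ε Δ K) := by
    intro Δ hL
    refine measure_congr ?_
    rw [Filter.eventuallyEq_set]
    filter_upwards [hL] with ω hω
    simp only [Set.mem_setOf_eq, eventB]
    constructor
    · intro h
      exact ⟨L Δ ω, h, fun i hi =>
        hω i (fun he => absurd h (not_le.mpr (by rwa [he] at hi)))⟩
    · rintro ⟨j, hjk, hj⟩
      by_contra hcon
      have hgt : K < |L Δ ω| := not_le.mp hcon
      have h1 := hj (L Δ ω) hgt
      have h2 := hω j (fun he => absurd hjk (not_le.mpr (by rwa [he])))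
      linarith
  -- Step B: monotone inclusion of the explicit events for drifts with the same sign.
  have stepB : ∀ Δ' : ℝ, Real.sign Δ₁ = Real.sign Δ' → |Δ₁| ≤ |Δ'| →
      eventB ε Δ₁ K ⊆ eventB ε Δ' K := by
    intro Δ' hs habs ω hω
    obtain ⟨j, hjk, hj⟩ := hω
    refine ⟨j, hjk, fun i hi => ?_⟩
    have e1 := walkX_shift ε hs j ω
    have e2 := walkX_shift ε hs i ω
    have hc : (0 : ℝ) ≤ (|Δ'| - |Δ₁|) / 2 := by linarith
    have hji : ((|j| : ℤ) : ℝ) ≤ ((|i| : ℤ) : ℝ) := by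
      exact_mod_cast le_of_lt (lt_of_le_of_lt hjk hi)
    have hmul := mul_le_mul_of_nonneg_right hji hc
    have hlt := hj i hi
    rw [e1, e2]
    linarith
  -- Step C: the explicit event has the same probability for `Δ₂` and `-Δ₂`.
  have stepC : μ (eventB ε (-Δ₂) K) = μ (eventB ε Δ₂ K) := by
    have hξ : Measurable fun ω (i : ℤ) => ε i ω := measurable_pi_lambda _ hmeas
    have hξ' : Measurable fun ω (i : ℤ) => -ε i ω :=
      measurable_pi_lambda _ fun i => (hmeas i).neg
    rw [eventB_neg, eventB_eq_preimage,
      ← Measure.map_apply hξ' (measurableSet_goodSet Δ₂ K),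
      ← Measure.map_apply hξ (measurableSet_goodSet Δ₂ K),
      map_neg_eq_map μ ε hmeas hindep hgauss]
  -- Put everything together, splitting on the signs of `Δ₁` and `Δ₂`.
  have hΔ₁ : Δ₁ ≠ 0 := by
    intro h; rw [h] at h₁; simp at h₁
  have hΔ₂ : Δ₂ ≠ 0 := by
    intro h; rw [h] at h₁₂; simp at h₁₂; linarith [abs_nonneg Δ₁]
  have main : ∀ Δ' : ℝ, Real.sign Δ₁ = Real.sign Δ' → |Δ'| = |Δ₂| →
      μ {ω | |L Δ₁ ω| ≤ K} ≤ μ (eventB ε Δ' K) := by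
    intro Δ' hs habs
    rw [stepA Δ₁ hL₁]
    exact measure_mono (stepB Δ' hs (by rw [habs]; exact h₁₂.le))
  rw [stepA Δ₂ hL₂]
  rcases lt_or_gt_of_ne hΔ₁ with hneg₁ | hpos₁ <;>
    rcases lt_or_gt_of_ne hΔ₂ with hneg₂ | hpos₂
  · exact main Δ₂ (by rw [Real.sign_of_neg hneg₁, Real.sign_of_neg hneg₂]) rfl
  · refine le_trans (main (-Δ₂) ?_ (abs_neg Δ₂)) (le_of_eq stepC)
    rw [Real.sign_of_neg hneg₁, Real.sign_of_neg (by linarith : -Δ₂ < 0)]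
  · refine le_trans (main (-Δ₂) ?_ (abs_neg Δ₂)) (le_of_eq stepC)
    rw [Real.sign_of_pos hpos₁, Real.sign_of_pos (by linarith : 0 < -Δ₂)]
  · exact main Δ₂ (by rw [Real.sign_of_pos hpos₁, Real.sign_of_pos hpos₂]) rfl
end

section
/- Let Δ ≠ 0, let m be a positive integer, and let S ⊆ ℤ be a set of integers containing the interval [−m, m]. Then P[ the a.s. unique minimizer of X_Δ over S has absolute value greater than m ] ≤ (2·e^{−Δ²/8}/(1 − e^{−Δ²/8}))·e^{−m·Δ²/8}; equivalently, the probability that there exists t ∈ S with |t| > m and X_Δ(t) ≤ X_Δ(s) for all s ∈ S is at most this bound. In particular the bound has the form A(Δ)·exp(−B(Δ)·m) with A(Δ) := 2e^{−Δ²/8}/(1 − e^{−Δ²/8}) decreasing and B(Δ) := Δ²/8 increasing in |Δ|. -/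
open MeasureTheory ProbabilityTheory Filter
open Real
open scoped NNReal ENNReal

lemma gauss_pdf_mul (t x : ℝ) :
    Real.exp (t * x) * gaussianPDFReal 0 1 x = Real.exp (t ^ 2 / 2) * gaussianPDFReal t 1 x := by
  simp only [gaussianPDFReal, NNReal.coe_one, mul_one, sub_zero]
  have h : Real.exp (t * x) * Real.exp (-x ^ 2 / 2) =
      Real.exp (t ^ 2 / 2) * Real.exp (-(x - t) ^ 2 / 2) := by
    rw [← Real.exp_add, ← Real.exp_add]; congr 1; ring
  calc Real.exp (t * x) * ((√(2 * π))⁻¹ * Real.exp (-x ^ 2 / 2))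
      = (√(2 * π))⁻¹ * (Real.exp (t * x) * Real.exp (-x ^ 2 / 2)) := by ring
    _ = (√(2 * π))⁻¹ * (Real.exp (t ^ 2 / 2) * Real.exp (-(x - t) ^ 2 / 2)) := by rw [h]
    _ = _ := by ring

lemma gauss_exp_integrable (t : ℝ) :
    Integrable (fun x => Real.exp (t * x)) (gaussianReal 0 1) := by
  rw [gaussianReal_of_var_ne_zero _ one_ne_zero,
    integrable_withDensity_iff (measurable_gaussianPDF _ _)
      (Eventually.of_forall fun x => ENNReal.ofReal_lt_top)]
  have : (fun x => Real.exp (t * x) * (gaussianPDF 0 1 x).toReal) =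
      fun x => Real.exp (t ^ 2 / 2) * gaussianPDFReal t 1 x := by
    funext x
    rw [gaussianPDF, ENNReal.toReal_ofReal (gaussianPDFReal_nonneg _ _ _), gauss_pdf_mul]
  rw [this]
  exact (integrable_gaussianPDFReal t 1).const_mul _

lemma gauss_exp_integral (t : ℝ) :
    ∫ x, Real.exp (t * x) ∂(gaussianReal 0 1) = Real.exp (t ^ 2 / 2) := by
  rw [gaussianReal_of_var_ne_zero _ one_ne_zero]
  have hpdf : gaussianPDF 0 1 = fun x => ((Real.toNNReal (gaussianPDFReal 0 1 x) : ℝ≥0) : ℝ≥0∞) := by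
    funext x; rfl
  rw [hpdf, integral_withDensity_eq_integral_smul
    (by exact (measurable_gaussianPDFReal 0 1).real_toNNReal)]
  have : (fun x => (Real.toNNReal (gaussianPDFReal 0 1 x)) • Real.exp (t * x)) =
      fun x => Real.exp (t ^ 2 / 2) * gaussianPDFReal t 1 x := by
    funext x
    rw [NNReal.smul_def, smul_eq_mul, Real.coe_toNNReal _ (gaussianPDFReal_nonneg _ _ _),
      mul_comm, gauss_pdf_mul]
  rw [this, integral_const_mul, integral_gaussianPDFReal_eq_one t one_ne_zero, mul_one]

section Chernoff

variable {Ω : Type*} [MeasurableSpace Ω] {μ : Measure Ω} [IsProbabilityMeasure μ]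
  {ε : ℤ → Ω → ℝ}

lemma exp_int (hmeas : ∀ i, Measurable (ε i)) (hgauss : ∀ i, Measure.map (ε i) μ = gaussianReal 0 1)
    (i : ℤ) (s : ℝ) : Integrable (fun ω => Real.exp (s * ε i ω)) μ := by
  have h := (gauss_exp_integrable s)
  rw [← hgauss i] at h
  exact (integrable_map_measure ((measurable_exp.comp ((measurable_id.const_mul s))).aestronglyMeasurable)
    (hmeas i).aemeasurable).mp h

lemma mgf_eps (hmeas : ∀ i, Measurable (ε i)) (hgauss : ∀ i, Measure.map (ε i) μ = gaussianReal 0 1)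
    (i : ℤ) (s : ℝ) : mgf (ε i) μ s = Real.exp (s ^ 2 / 2) := by
  rw [mgf, ← gauss_exp_integral s, ← hgauss i]
  exact (integral_map (hmeas i).aemeasurable
      ((measurable_exp.comp ((measurable_id.const_mul s))).aestronglyMeasurable)).symm

lemma chernoff_sum (hmeas : ∀ i, Measurable (ε i))
    (hindep : iIndepFun ε μ)
    (hgauss : ∀ i, Measure.map (ε i) μ = gaussianReal 0 1)
    {c : ℝ} (hc : c = 1 ∨ c = -1) {l : ℝ} (hl : 0 ≤ l) (a : ℝ) (F : Finset ℤ) :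
    μ {ω | c * ∑ j ∈ F, ε j ω ≤ -a}
      ≤ ENNReal.ofReal (Real.exp (-(l * a) + (F.card : ℝ) * l ^ 2 / 2)) := by
  have hc2 : c ^ 2 = 1 := by rcases hc with h | h <;> simp [h]
  set X : ℤ → Ω → ℝ := fun i ω => c * ε i ω with hX
  have hXmeas : ∀ i, Measurable (X i) := fun i => (hmeas i).const_mul c
  have hXindep : iIndepFun X μ :=
    hindep.comp (fun _ x => c * x) (fun _ => measurable_id.const_mul c)
  have hXint : ∀ s : ℝ, ∀ i, Integrable (fun ω => Real.exp (s * X i ω)) μ := by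
    intro s i
    have : (fun ω => Real.exp (s * X i ω)) = fun ω => Real.exp ((s * c) * ε i ω) := by
      funext ω; rw [hX]; ring_nf
    rw [this]; exact exp_int hmeas hgauss i (s * c)
  have hXmgf : ∀ s : ℝ, ∀ i, mgf (X i) μ s = Real.exp (s ^ 2 / 2) := by
    intro s i
    have : mgf (X i) μ s = mgf (ε i) μ (s * c) := by
      rw [mgf, mgf]; congr 1; funext ω; rw [hX]; ring_nf
    rw [this, mgf_eps hmeas hgauss, mul_pow, hc2, mul_one]
  have hsum : (fun ω => c * ∑ j ∈ F, ε j ω) = ∑ j ∈ F, X j := by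
    funext ω; simp [hX, Finset.mul_sum]
  have hint : Integrable (fun ω => Real.exp ((-l) * (∑ j ∈ F, X j) ω)) μ :=
    hXindep.integrable_exp_mul_sum hXmeas (fun i _ => hXint (-l) i)
  have hch := measure_le_le_exp_mul_mgf (μ := μ) (X := ∑ j ∈ F, X j) (-a)
    (neg_nonpos_of_nonneg hl) hint
  have hmgfsum : mgf (∑ j ∈ F, X j) μ (-l) = Real.exp ((F.card : ℝ) * l ^ 2 / 2) := by
    rw [hXindep.mgf_sum hXmeas]
    rw [Finset.prod_congr rfl (fun i _ => hXmgf (-l) i), Finset.prod_const, ← Real.exp_nat_mul]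
    congr 1; ring_nf
  rw [hmgfsum] at hch
  have := ENNReal.ofReal_le_ofReal hch
  rw [measureReal_def, ENNReal.ofReal_toReal (measure_ne_top _ _)] at this
  calc μ {ω | c * ∑ j ∈ F, ε j ω ≤ -a} = μ {ω | (∑ j ∈ F, X j) ω ≤ -a} := by rw [← hsum]
    _ ≤ ENNReal.ofReal (Real.exp (-(-l) * (-a)) * Real.exp ((F.card : ℝ) * l ^ 2 / 2)) := this
    _ = _ := by rw [← Real.exp_add]; congr 1; ring

end Chernoff

section Walk

variable {Ω : Type*} [MeasurableSpace Ω] {μ : Measure Ω} [IsProbabilityMeasure μ]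
  {ε : ℤ → Ω → ℝ} {Δ : ℝ}

lemma walk_tail (hmeas : ∀ i, Measurable (ε i))
    (hindep : iIndepFun ε μ)
    (hgauss : ∀ i, Measure.map (ε i) μ = gaussianReal 0 1)
    (hΔ : Δ ≠ 0) (t : ℤ) (ht : t ≠ 0) :
    μ {ω | walkX ε Δ t ω ≤ 0}
      ≤ ENNReal.ofReal (Real.exp (-((|t| : ℤ) : ℝ) * Δ ^ 2 / 8)) := by
  have hc : Real.sign Δ = 1 ∨ Real.sign Δ = -1 := by
    rcases hΔ.lt_or_gt with h | h
    · exact Or.inr (Real.sign_of_neg h)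
    · exact Or.inl (Real.sign_of_pos h)
  have habs : |Δ| ^ 2 = Δ ^ 2 := sq_abs Δ
  have hl : (0 : ℝ) ≤ |Δ| / 2 := by positivity
  rcases ht.lt_or_gt with hneg | hpos
  · have hset : {ω | walkX ε Δ t ω ≤ 0} =
        {ω | (-Real.sign Δ) * ∑ j ∈ Finset.Icc (t + 1) (0 : ℤ), ε j ω
          ≤ -(((|t| : ℤ) : ℝ) * |Δ| / 2)} := by
      ext ω
      simp only [walkX, if_neg (by omega : ¬ (0:ℤ) < t), if_pos hneg, Set.mem_setOf_eq, neg_mul]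
      constructor <;> intro h <;> linarith
    have hcard : (((Finset.Icc (t + 1) (0 : ℤ)).card : ℕ) : ℝ) = ((|t| : ℤ) : ℝ) := by
      rw [Int.card_Icc]
      have h1 : ((0 : ℤ) + 1 - (t + 1)).toNat = (-t).toNat := by omega
      have h2 : (((-t).toNat : ℤ)) = |t| := by rw [abs_of_neg hneg]; omega
      rw [h1, ← h2]
      push_cast
      ring
    rw [hset]
    refine le_trans (chernoff_sum hmeas hindep hgauss ?_ hl _ _) (le_of_eq ?_)
    · rcases hc with h | h
      · exact Or.inr (by rw [h])
      · exact Or.inl (by rw [h]; ring)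
    · congr 1
      rw [hcard, ← habs]
      ring
  · have hset : {ω | walkX ε Δ t ω ≤ 0} =
        {ω | Real.sign Δ * ∑ j ∈ Finset.Icc (1 : ℤ) t, ε j ω
          ≤ -(((|t| : ℤ) : ℝ) * |Δ| / 2)} := by
      ext ω
      have habs_t : ((|t| : ℤ) : ℝ) = (t : ℝ) := by
        rw [abs_of_pos hpos]
      simp only [walkX, if_pos hpos, Set.mem_setOf_eq, habs_t]
      constructor <;> intro h <;> linarith
    have hcard : (((Finset.Icc (1 : ℤ) t).card : ℕ) : ℝ) = ((|t| : ℤ) : ℝ) := by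
      rw [Int.card_Icc]
      have : (t + 1 - 1).toNat = t.toNat := by omega
      rw [this]
      have : ((t.toNat : ℤ) : ℝ) = ((|t| : ℤ) : ℝ) := by
        congr 1; rw [abs_of_pos hpos]; omega
      rw [← this]
      push_cast
      ring
    rw [hset]
    refine le_trans (chernoff_sum hmeas hindep hgauss hc hl _ _) (le_of_eq ?_)
    congr 1
    rw [hcard, ← habs]
    ring

end Walk

/-- Exponential tail bound for the minimizer of `X_Δ` over a set `S ⊇ [−m,m]`:
the probability that some `t ∈ S` with `|t| > m` minimizes `X_Δ` over `S` is at most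
`(2 e^{−Δ²/8}/(1 − e^{−Δ²/8})) e^{−mΔ²/8}`. -/
theorem argmin_tail_bound
    {Ω : Type*} [MeasurableSpace Ω] (μ : Measure Ω) [IsProbabilityMeasure μ]
    (ε : ℤ → Ω → ℝ)
    (hmeas : ∀ i, Measurable (ε i))
    (hindep : iIndepFun ε μ)
    (hgauss : ∀ i, Measure.map (ε i) μ = gaussianReal 0 1)
    (Δ : ℝ) (hΔ : Δ ≠ 0) (m : ℕ) (hm : 0 < m)
    (S : Set ℤ) (hS : Set.Icc (-(m : ℤ)) (m : ℤ) ⊆ S) :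
    μ {ω | ∃ t ∈ S, (m : ℤ) < |t| ∧ ∀ s ∈ S, walkX ε Δ t ω ≤ walkX ε Δ s ω}
      ≤ ENNReal.ofReal
          (2 * Real.exp (-(Δ ^ 2) / 8) / (1 - Real.exp (-(Δ ^ 2) / 8)) *
            Real.exp (-(m : ℝ) * Δ ^ 2 / 8)) := by
  set q : ℝ := Δ ^ 2 / 8 with hqdef
  have hq : 0 < q := by positivity
  set r : ℝ := Real.exp (-q) with hrdef
  have hr0 : 0 < r := Real.exp_pos _
  have hr1 : r < 1 := by
    rw [hrdef]
    exact Real.exp_lt_one_iff.mpr (by linarith)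
  -- the two families of bad events
  set A : ℕ → Set Ω := fun n => {ω | walkX ε Δ ((m : ℤ) + 1 + (n : ℤ)) ω ≤ 0} with hA
  set B : ℕ → Set Ω := fun n => {ω | walkX ε Δ (-((m : ℤ) + 1 + (n : ℤ))) ω ≤ 0} with hB
  have h0S : (0 : ℤ) ∈ S := hS ⟨by omega, by omega⟩
  have hwalk0 : ∀ ω, walkX ε Δ (0 : ℤ) ω = 0 := fun ω => by simp [walkX]
  have hsub : {ω | ∃ t ∈ S, (m : ℤ) < |t| ∧ ∀ s ∈ S, walkX ε Δ t ω ≤ walkX ε Δ s ω}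
      ⊆ ⋃ n : ℕ, (A n ∪ B n) := by
    intro ω hω
    obtain ⟨t, htS, htm, hmin⟩ := hω
    have hle : walkX ε Δ t ω ≤ 0 := by
      have := hmin 0 h0S
      rwa [hwalk0] at this
    rcases lt_trichotomy t 0 with hneg | hzero | hpos
    · refine Set.mem_iUnion.2 ⟨(-t - m - 1).toNat, Or.inr ?_⟩
      have ht' : -((m : ℤ) + 1 + ((-t - m - 1).toNat : ℤ)) = t := by
        rw [abs_of_neg hneg] at htm; omega
      simp only [hB, Set.mem_setOf_eq, ht']
      exact hle
    · exfalso; rw [hzero] at htm; simp at htm; omega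
    · refine Set.mem_iUnion.2 ⟨(t - m - 1).toNat, Or.inl ?_⟩
      have ht' : (m : ℤ) + 1 + ((t - m - 1).toNat : ℤ) = t := by
        rw [abs_of_pos hpos] at htm; omega
      simp only [hA, Set.mem_setOf_eq, ht']
      exact hle
  have hboundA : ∀ n : ℕ, μ (A n) ≤ ENNReal.ofReal (Real.exp (-((m : ℝ) + 1 + n) * q)) := by
    intro n
    have ht0 : ((m : ℤ) + 1 + (n : ℤ)) ≠ 0 := by omega
    refine le_trans (walk_tail hmeas hindep hgauss hΔ _ ht0) (le_of_eq ?_)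
    congr 1
    have : |(m : ℤ) + 1 + (n : ℤ)| = (m : ℤ) + 1 + (n : ℤ) := abs_of_pos (by omega)
    rw [this, hqdef]
    push_cast
    ring
  have hboundB : ∀ n : ℕ, μ (B n) ≤ ENNReal.ofReal (Real.exp (-((m : ℝ) + 1 + n) * q)) := by
    intro n
    have ht0 : -((m : ℤ) + 1 + (n : ℤ)) ≠ 0 := by omega
    refine le_trans (walk_tail hmeas hindep hgauss hΔ _ ht0) (le_of_eq ?_)
    congr 1
    have : |(-((m : ℤ) + 1 + (n : ℤ)))| = (m : ℤ) + 1 + (n : ℤ) := by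
      rw [abs_neg]; exact abs_of_pos (by omega)
    rw [this, hqdef]
    push_cast
    ring
  have hgeom : ∀ n : ℕ, Real.exp (-((m : ℝ) + 1 + n) * q)
      = Real.exp (-((m : ℝ) + 1) * q) * r ^ n := by
    intro n
    rw [hrdef, ← Real.exp_nat_mul, ← Real.exp_add]
    congr 1
    ring
  calc μ {ω | ∃ t ∈ S, (m : ℤ) < |t| ∧ ∀ s ∈ S, walkX ε Δ t ω ≤ walkX ε Δ s ω}
      ≤ μ (⋃ n : ℕ, (A n ∪ B n)) := measure_mono hsub
    _ ≤ ∑' n : ℕ, μ (A n ∪ B n) := measure_iUnion_le _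
    _ ≤ ∑' n : ℕ, ENNReal.ofReal (2 * Real.exp (-((m : ℝ) + 1) * q) * r ^ n) := by
        refine ENNReal.tsum_le_tsum fun n => ?_
        refine le_trans (measure_union_le _ _) ?_
        refine le_trans (add_le_add (hboundA n) (hboundB n)) (le_of_eq ?_)
        rw [← ENNReal.ofReal_add (Real.exp_nonneg _) (Real.exp_nonneg _)]
        congr 1
        rw [hgeom n]
        ring
    _ = ENNReal.ofReal (∑' n : ℕ, 2 * Real.exp (-((m : ℝ) + 1) * q) * r ^ n) := by
        refine (ENNReal.ofReal_tsum_of_nonneg (fun n => by positivity) ?_).symm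
        exact (summable_geometric_of_lt_one hr0.le hr1).mul_left _
    _ = ENNReal.ofReal (2 * Real.exp (-((m : ℝ) + 1) * q) * (1 - r)⁻¹) := by
        rw [tsum_mul_left, tsum_geometric_of_lt_one hr0.le hr1]
    _ = _ := by
        congr 1
        have h1 : -(Δ ^ 2) / 8 = -q := by rw [hqdef]; ring
        have h2 : -(m : ℝ) * Δ ^ 2 / 8 = -(m : ℝ) * q := by rw [hqdef]; ring
        rw [h1, h2, ← hrdef]
        have h3 : Real.exp (-((m : ℝ) + 1) * q) = r * Real.exp (-(m : ℝ) * q) := by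
          rw [hrdef, ← Real.exp_add]; congr 1; ring
        rw [h3]
        field_simp
end

section
/- Let Δ ≠ 0, let m be a positive integer, and let S ⊆ ℤ contain the interval [−m, m]. Then the probability that the a.s. unique minimizer of X_Δ over [−m, m] ∩ ℤ equals the a.s. unique minimizer of X_Δ over S is at least 1 − (2·e^{−Δ²/8}/(1 − e^{−Δ²/8}))·e^{−m·Δ²/8}. -/
open MeasureTheory ProbabilityTheory Filter

/-- `L` is almost surely the unique minimizer of the process `f` over the set `S ⊆ ℤ`. -/
def IsASUniqueArgminOn {Ω : Type*} [MeasurableSpace Ω] (μ : Measure Ω)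
    (f : ℤ → Ω → ℝ) (S : Set ℤ) (L : Ω → ℤ) : Prop :=
  ∀ᵐ ω ∂μ, L ω ∈ S ∧ ∀ t ∈ S, t ≠ L ω → f (L ω) ω < f t ω

section Aux

lemma aux_pdf_identity (s x : ℝ) :
    Real.exp (s * x) * gaussianPDFReal 0 1 x = Real.exp (s^2/2) * gaussianPDFReal s 1 x := by
  simp only [gaussianPDFReal_def]
  rw [mul_left_comm, mul_left_comm (Real.exp (s^2/2)), ← Real.exp_add, ← Real.exp_add]
  congr 2
  push_cast
  ring

lemma aux_gaussianReal_std : gaussianReal 0 1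
    = (volume : Measure ℝ).withDensity (fun x => ((gaussianPDFReal 0 1 x).toNNReal : ENNReal)) := by
  rw [gaussianReal_of_var_ne_zero 0 one_ne_zero, gaussianPDF_def]
  rfl

lemma aux_smul_pdf_eq (s x : ℝ) : (gaussianPDFReal 0 1 x).toNNReal • Real.exp (s*x)
      = Real.exp (s^2/2) * gaussianPDFReal s 1 x := by
  rw [NNReal.smul_def, smul_eq_mul, Real.coe_toNNReal _ (gaussianPDFReal_nonneg 0 1 x),
    mul_comm, aux_pdf_identity]

lemma aux_integral_exp_gaussian (s : ℝ) :
    ∫ x, Real.exp (s * x) ∂(gaussianReal 0 1) = Real.exp (s^2/2) := by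
  rw [aux_gaussianReal_std, integral_withDensity_eq_integral_smul
    ((measurable_gaussianPDFReal 0 1).real_toNNReal) (fun x => Real.exp (s*x))]
  simp_rw [aux_smul_pdf_eq]
  rw [integral_const_mul, integral_gaussianPDFReal_eq_one s one_ne_zero, mul_one]

lemma aux_integrable_exp_gaussian (s : ℝ) :
    Integrable (fun x => Real.exp (s * x)) (gaussianReal 0 1) := by
  rw [aux_gaussianReal_std, integrable_withDensity_iff_integrable_smul
    ((measurable_gaussianPDFReal 0 1).real_toNNReal)]
  simp_rw [aux_smul_pdf_eq]
  exact (integrable_gaussianPDFReal s 1).const_mul _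

variable {Ω : Type*} [MeasurableSpace Ω] {μ : Measure Ω} [IsProbabilityMeasure μ]

omit [IsProbabilityMeasure μ] in
lemma aux_integrable_exp_of_gauss {X : Ω → ℝ} (hX : Measurable X)
    (hmap : Measure.map X μ = gaussianReal 0 1) (s : ℝ) :
    Integrable (fun ω => Real.exp (s * X ω)) μ := by
  have h := aux_integrable_exp_gaussian s
  rw [← hmap] at h
  exact (integrable_map_measure ((measurable_id.const_mul s).exp).aestronglyMeasurable
    hX.aemeasurable).mp h

omit [IsProbabilityMeasure μ] in
lemma aux_mgf_of_gauss {X : Ω → ℝ} (hX : Measurable X)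
    (hmap : Measure.map X μ = gaussianReal 0 1) (s : ℝ) :
    mgf X μ s = Real.exp (s^2/2) := by
  have h := integral_map (μ := μ) (φ := X) hX.aemeasurable
    (f := fun x => Real.exp (s * x)) ((measurable_id.const_mul s).exp).aestronglyMeasurable
  rw [hmap, aux_integral_exp_gaussian] at h
  rw [mgf, ← h]

lemma aux_chernoff_sum (ε : ℤ → Ω → ℝ) (hmeas : ∀ i, Measurable (ε i))
    (hindep : iIndepFun ε μ)
    (hgauss : ∀ i, Measure.map (ε i) μ = gaussianReal 0 1)
    {Δ c : ℝ} (hc : c^2 = 1) (F : Finset ℤ) :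
    μ {ω | c * (∑ j ∈ F, ε j ω) + (F.card : ℝ) * |Δ| / 2 ≤ 0}
      ≤ ENNReal.ofReal (Real.exp (-(F.card : ℝ) * Δ^2 / 8)) := by
  set X' : ℤ → Ω → ℝ := fun j ω => c * ε j ω with hX'
  have hmeas' : ∀ j, Measurable (X' j) := fun j => (hmeas j).const_mul c
  have hindep' : iIndepFun X' μ :=
    hindep.comp (fun _ => (c * ·)) (fun _ => measurable_const_mul c)
  have hone : (⟨c^2, sq_nonneg c⟩ : NNReal) = 1 := by
    ext; simpa using hc
  have hmap' : ∀ j, Measure.map (X' j) μ = gaussianReal 0 1 := by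
    intro j
    have h1 : Measure.map (X' j) μ = ((Measure.map (ε j) μ).map (c * ·)) :=
      (Measure.map_map (measurable_const_mul c) (hmeas j)).symm
    rw [h1, hgauss j, gaussianReal_map_const_mul, mul_zero]
    congr 1; ext; simp [hc]
  set t : ℝ := -|Δ|/2 with ht
  set n : ℕ := F.card with hn
  set a : ℝ := -(n : ℝ) * |Δ| / 2 with ha
  have hint : ∀ j ∈ F, Integrable (fun ω => Real.exp (t * X' j ω)) μ :=
    fun j _ => aux_integrable_exp_of_gauss (hmeas' j) (hmap' j) t
  have key := measure_le_le_exp_mul_mgf (X := ∑ j ∈ F, X' j) (μ := μ) (t := t) a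
    (by rw [ht]; linarith [abs_nonneg Δ])
    (hindep'.integrable_exp_mul_sum hmeas' hint)
  rw [hindep'.mgf_sum hmeas'] at key
  have hprod : ∏ j ∈ F, mgf (X' j) μ t = Real.exp ((n:ℝ) * (t^2/2)) := by
    rw [Finset.prod_congr rfl (fun j _ => aux_mgf_of_gauss (hmeas' j) (hmap' j) t),
      Finset.prod_const, ← Real.exp_nat_mul]
  rw [hprod] at key
  have hrhs : Real.exp (-t * a) * Real.exp ((n:ℝ) * (t^2/2))
      = Real.exp (-(n : ℝ) * Δ^2 / 8) := by
    rw [← Real.exp_add]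
    congr 1
    rw [ht, ha]; ring_nf
    nlinarith [sq_abs Δ]
  rw [hrhs] at key
  have hev : {ω | c * (∑ j ∈ F, ε j ω) + (n : ℝ) * |Δ| / 2 ≤ 0}
      = {ω | (∑ j ∈ F, X' j) ω ≤ a} := by
    ext ω
    simp only [Set.mem_setOf_eq, Finset.sum_apply, hX', ← Finset.mul_sum, ha]
    constructor <;> intro h <;> linarith
  rw [hev]
  calc μ {ω | (∑ j ∈ F, X' j) ω ≤ a}
      = ENNReal.ofReal ((μ {ω | (∑ j ∈ F, X' j) ω ≤ a}).toReal) :=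
        (ENNReal.ofReal_toReal (measure_ne_top μ _)).symm
    _ ≤ _ := ENNReal.ofReal_le_ofReal key

lemma aux_sign_sq {Δ : ℝ} (hΔ : Δ ≠ 0) : (Real.sign Δ)^2 = 1 := by
  rcases hΔ.lt_or_gt with h | h
  · rw [Real.sign_of_neg h]; norm_num
  · rw [Real.sign_of_pos h]; norm_num

lemma aux_walkX_bad (ε : ℤ → Ω → ℝ) (hmeas : ∀ i, Measurable (ε i))
    (hindep : iIndepFun ε μ)
    (hgauss : ∀ i, Measure.map (ε i) μ = gaussianReal 0 1)
    {Δ : ℝ} (hΔ : Δ ≠ 0) (t : ℤ) (ht : t ≠ 0) :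
    μ {ω | walkX ε Δ t ω ≤ 0}
      ≤ ENNReal.ofReal (Real.exp (-(t.natAbs : ℝ) * Δ^2 / 8)) := by
  rcases ht.lt_or_gt with h | h
  · have hcard : (Finset.Icc (t+1) (0:ℤ)).card = t.natAbs := by
      rw [Int.card_Icc]; omega
    have hco : ((|t| : ℤ) : ℝ) = (((Finset.Icc (t+1) (0:ℤ)).card : ℕ) : ℝ) := by
      rw [hcard, Nat.cast_natAbs]
    have hset : {ω | walkX ε Δ t ω ≤ 0}
        = {ω | (-Real.sign Δ) * (∑ j ∈ Finset.Icc (t+1) (0:ℤ), ε j ω)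
            + (((Finset.Icc (t+1) (0:ℤ)).card : ℕ) : ℝ) * |Δ| / 2 ≤ 0} := by
      ext ω
      simp only [walkX, if_neg (by omega : ¬ 0 < t), if_pos h, Set.mem_setOf_eq]
      rw [show -(Real.sign Δ * (∑ j ∈ Finset.Icc (t+1) (0:ℤ), ε j ω)) + ((|t| : ℤ) : ℝ) * |Δ| / 2
          = (-Real.sign Δ) * (∑ j ∈ Finset.Icc (t+1) (0:ℤ), ε j ω)
            + (((Finset.Icc (t+1) (0:ℤ)).card : ℕ) : ℝ) * |Δ| / 2 from by rw [← hco]; ring]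
    rw [hset, show (t.natAbs : ℝ) = (((Finset.Icc (t+1) (0:ℤ)).card : ℕ) : ℝ) from by rw [hcard]]
    exact aux_chernoff_sum ε hmeas hindep hgauss
      (by rw [neg_pow]; simp [aux_sign_sq hΔ]) _
  · have hcard : (Finset.Icc (1:ℤ) t).card = t.natAbs := by
      rw [Int.card_Icc]; omega
    have hco : ((t : ℤ) : ℝ) = (((Finset.Icc (1:ℤ) t).card : ℕ) : ℝ) := by
      rw [hcard, Nat.cast_natAbs, abs_of_pos h]
    have hset : {ω | walkX ε Δ t ω ≤ 0}
        = {ω | Real.sign Δ * (∑ j ∈ Finset.Icc (1:ℤ) t, ε j ω)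
            + (((Finset.Icc (1:ℤ) t).card : ℕ) : ℝ) * |Δ| / 2 ≤ 0} := by
      ext ω
      simp only [walkX, if_pos h, Set.mem_setOf_eq]
      rw [hco]
    rw [hset, show (t.natAbs : ℝ) = (((Finset.Icc (1:ℤ) t).card : ℕ) : ℝ) from by rw [hcard]]
    exact aux_chernoff_sum ε hmeas hindep hgauss (aux_sign_sq hΔ) _

end Aux

/-- With probability at least
`1 − (2 e^{−Δ²/8}/(1 − e^{−Δ²/8})) e^{−mΔ²/8}`, the minimizer of `X_Δ` over `[−m,m]`
agrees with its minimizer over any `S ⊇ [−m,m]`. -/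
theorem argmin_restriction_agreement
    {Ω : Type*} [MeasurableSpace Ω] (μ : Measure Ω) [IsProbabilityMeasure μ]
    (ε : ℤ → Ω → ℝ)
    (hmeas : ∀ i, Measurable (ε i))
    (hindep : iIndepFun ε μ)
    (hgauss : ∀ i, Measure.map (ε i) μ = gaussianReal 0 1)
    (Δ : ℝ) (hΔ : Δ ≠ 0) (m : ℕ) (hm : 0 < m)
    (S : Set ℤ) (hS : Set.Icc (-(m : ℤ)) (m : ℤ) ⊆ S)
    (Lm LS : Ω → ℤ)
    (hLm : IsASUniqueArgminOn μ (walkX ε Δ) (Set.Icc (-(m : ℤ)) (m : ℤ)) Lm)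
    (hLS : IsASUniqueArgminOn μ (walkX ε Δ) S LS) :
    1 - ENNReal.ofReal
          (2 * Real.exp (-(Δ ^ 2) / 8) / (1 - Real.exp (-(Δ ^ 2) / 8)) *
            Real.exp (-(m : ℝ) * Δ ^ 2 / 8))
      ≤ μ {ω | Lm ω = LS ω} := by
  set r : ℝ := Real.exp (-(Δ ^ 2) / 8) with hr
  have hr0 : 0 < r := Real.exp_pos _
  have hr1 : r < 1 := by
    rw [hr, Real.exp_lt_one_iff]
    have : 0 < Δ^2 := by positivity
    linarith
  set B : ℤ → Set Ω := fun t => {ω | walkX ε Δ t ω ≤ 0} with hBdef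
  have hB : ∀ t : ℤ, t ≠ 0 →
      μ (B t) ≤ ENNReal.ofReal (Real.exp (-(t.natAbs : ℝ) * Δ^2 / 8)) :=
    fun t ht => aux_walkX_bad ε hmeas hindep hgauss hΔ t ht
  set U : Set Ω := ⋃ k : ℕ, (B ((m+1+k : ℕ) : ℤ) ∪ B (-((m+1+k : ℕ) : ℤ))) with hUdef
  have hexp : ∀ k : ℕ, Real.exp (-(((m+1+k : ℕ) : ℝ)) * Δ^2 / 8) = r^(m+1) * r^k := by
    intro k
    rw [← pow_add, hr, ← Real.exp_nat_mul]
    congr 1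
    push_cast
    ring
  have hU : μ U ≤ ENNReal.ofReal (2 * r^(m+1) * (1-r)⁻¹) := by
    calc μ U ≤ ∑' k : ℕ, μ (B ((m+1+k : ℕ) : ℤ) ∪ B (-((m+1+k : ℕ) : ℤ))) :=
          measure_iUnion_le _
    _ ≤ ∑' k : ℕ, ENNReal.ofReal (2 * r^(m+1) * r^k) := by
        refine ENNReal.tsum_le_tsum fun k => ?_
        have hne : ((m+1+k : ℕ) : ℤ) ≠ 0 := by positivity
        have h1 := hB _ hne
        have h2 := hB _ (neg_ne_zero.mpr hne)
        have habs : ((((m+1+k : ℕ) : ℤ)).natAbs : ℝ) = ((m+1+k : ℕ) : ℝ) := by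
          rw [Int.natAbs_natCast]
        have habs2 : (((-((m+1+k : ℕ) : ℤ))).natAbs : ℝ) = ((m+1+k : ℕ) : ℝ) := by
          rw [Int.natAbs_neg, Int.natAbs_natCast]
        rw [habs, hexp k] at h1
        rw [habs2, hexp k] at h2
        calc μ (B ((m+1+k : ℕ) : ℤ) ∪ B (-((m+1+k : ℕ) : ℤ)))
            ≤ μ (B ((m+1+k : ℕ) : ℤ)) + μ (B (-((m+1+k : ℕ) : ℤ))) := measure_union_le _ _
          _ ≤ ENNReal.ofReal (r^(m+1) * r^k) + ENNReal.ofReal (r^(m+1) * r^k) :=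
              add_le_add h1 h2
          _ = ENNReal.ofReal (2 * r^(m+1) * r^k) := by
              rw [← ENNReal.ofReal_add (by positivity) (by positivity)]
              congr 1
              ring
    _ = ENNReal.ofReal (∑' k : ℕ, 2 * r^(m+1) * r^k) := by
        rw [ENNReal.ofReal_tsum_of_nonneg (fun k => by positivity)
          ((summable_geometric_of_lt_one hr0.le hr1).mul_left _)]
    _ = ENNReal.ofReal (2 * r^(m+1) * (1-r)⁻¹) := by
        rw [tsum_mul_left, tsum_geometric_of_lt_one hr0.le hr1]
  have hbound : 2 * r / (1 - r) * Real.exp (-(m:ℝ) * Δ^2 / 8) = 2 * r^(m+1) * (1-r)⁻¹ := by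
    have hm' : Real.exp (-(m:ℝ) * Δ^2 / 8) = r^m := by
      rw [hr, ← Real.exp_nat_mul]
      congr 1
      ring
    rw [hm', div_eq_mul_inv]
    ring
  have h0mem : (0:ℤ) ∈ Set.Icc (-(m:ℤ)) (m:ℤ) := by
    simp only [Set.mem_Icc]
    omega
  have hwalk0 : ∀ ω : Ω, walkX ε Δ 0 ω = 0 := fun ω => by simp [walkX]
  have hae : μ {ω | ¬ Lm ω = LS ω} ≤ μ U := by
    refine measure_mono_ae ?_
    filter_upwards [hLm, hLS] with ω h1 h2
    intro hne
    obtain ⟨hLmmem, hLmmin⟩ := h1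
    obtain ⟨hLSmem, hLSmin⟩ := h2
    by_cases hmem : LS ω ∈ Set.Icc (-(m:ℤ)) (m:ℤ)
    · exfalso
      have ha := hLmmin (LS ω) hmem (fun h => hne h.symm)
      have hb := hLSmin (Lm ω) (hS hLmmem) hne
      linarith
    · have hne0 : LS ω ≠ 0 := fun h0 => hmem (h0 ▸ h0mem)
      have hle : walkX ε Δ (LS ω) ω ≤ 0 := by
        have := hLSmin 0 (hS h0mem) (fun h0 => hne0 h0.symm)
        rw [hwalk0] at this
        linarith
      rw [Set.mem_Icc] at hmem
      have hmem2 : LS ω < -(m:ℤ) ∨ (m:ℤ) < LS ω := by omega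
      rcases hmem2 with hlt | hgt
      · obtain ⟨k, hk⟩ : ∃ k : ℕ, LS ω = -((m+1+k : ℕ) : ℤ) :=
          ⟨(-(LS ω) - (m+1)).toNat, by push_cast; omega⟩
        refine Set.mem_iUnion.mpr ⟨k, Or.inr ?_⟩
        show walkX ε Δ (-((m+1+k : ℕ) : ℤ)) ω ≤ 0
        rw [← hk]
        exact hle
      · obtain ⟨k, hk⟩ : ∃ k : ℕ, LS ω = ((m+1+k : ℕ) : ℤ) :=
          ⟨(LS ω - (m+1)).toNat, by push_cast; omega⟩
        refine Set.mem_iUnion.mpr ⟨k, Or.inl ?_⟩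
        show walkX ε Δ (((m+1+k : ℕ) : ℤ)) ω ≤ 0
        rw [← hk]
        exact hle
  have h2 : μ {ω | ¬ Lm ω = LS ω}
      ≤ ENNReal.ofReal (2 * r / (1 - r) * Real.exp (-(m:ℝ) * Δ^2 / 8)) := by
    rw [hbound]
    exact hae.trans hU
  have h1 : (1 : ENNReal) ≤ μ {ω | Lm ω = LS ω} + μ {ω | ¬ Lm ω = LS ω} := by
    rw [← measure_univ (μ := μ)]
    refine le_trans (measure_mono ?_) (measure_union_le _ _)
    intro ω _
    by_cases h : Lm ω = LS ω
    · exact Or.inl h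
    · exact Or.inr h
  refine tsub_le_iff_right.mpr (h1.trans (add_le_add le_rfl h2))
end
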